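/- Under the Bernoulli model setup, the generalization gap satisfies g_n ≥ 0 for every n ≥ 1. -/
import Mathlib

open Real Finset

private lemma sign_le_one' (x : ℝ) : Real.sign x ≤ 1 := by
  rcases Real.sign_apply_eq x with h | h | h <;> rw [h] <;> norm_num

private lemma f_nonneg (ε x : ℝ) (hx : 0 ≤ x) :
    0 ≤ Real.sign x - Real.sign (x - ε * Real.sign x) := by
  rcases eq_or_lt_of_le hx with h | h
  · simp [← h, Real.sign_zero]
  · rw [Real.sign_of_pos h]
    linarith [sign_le_one' (x - ε * 1)]

private lemma f_antisym (ε x : ℝ) :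
    Real.sign (-x) - Real.sign (-x - ε * Real.sign (-x))
      = -(Real.sign x - Real.sign (x - ε * Real.sign x)) := by
  rw [Real.sign_neg]
  have : -x - ε * -Real.sign x = -(x - ε * Real.sign x) := by ring
  rw [this, Real.sign_neg]
  ring

/-- Generalization gap `g_n = Wτ · E[Σⱼ θ(j)(sign(u(j)) − sign(u(j) − ε·sign(u(j))))]` in
the Bernoulli model, where `u(j) = θ(j)(2 S_j/n − 1)` with independent
`S_j ~ Binomial(n, (1+τ)/2)`; by linearity of expectation this equals the coordinatewise
sum of expectations over the binomial distribution. -/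
noncomputable def berGap (d : ℕ) (W ε : ℝ) (θ : Fin d → ℝ) (τ : ℝ) (n : ℕ) : ℝ :=
  W * τ * ∑ j, θ j *
    ∑ k ∈ Finset.range (n + 1),
      (n.choose k : ℝ) * ((1 + τ)/2) ^ k * ((1 - τ)/2) ^ (n - k) *
      (Real.sign (θ j * (2 * (k : ℝ)/n - 1))
        - Real.sign (θ j * (2 * (k : ℝ)/n - 1)
            - ε * Real.sign (θ j * (2 * (k : ℝ)/n - 1))))

theorem berGap_nonneg (d : ℕ) (W ε : ℝ) (θ : Fin d → ℝ) (τ : ℝ)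
    (hW : 0 < W) (hε : 0 < ε) (hθ : ∀ j, 0 ≤ θ j) (hτ : τ ∈ Set.Ioo (0 : ℝ) 1)
    (n : ℕ) (hn : 1 ≤ n) :
    0 ≤ berGap d W ε θ τ n := by
  obtain ⟨hτ0, hτ1⟩ := hτ
  unfold berGap
  have hWτ : 0 ≤ W * τ := by positivity
  refine mul_nonneg hWτ (Finset.sum_nonneg fun j _ => mul_nonneg (hθ j) ?_)
  set p : ℝ := (1 + τ)/2 with hp
  set q : ℝ := (1 - τ)/2 with hq
  have hq0 : 0 < q := by simp only [hq]; linarith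
  have hp0 : 0 < p := by simp only [hp]; linarith
  have hqp : q ≤ p := by simp only [hp, hq]; linarith
  have hn0 : (0 : ℝ) < n := by exact_mod_cast hn
  set F : ℕ → ℝ := fun k =>
    Real.sign (θ j * (2 * (k : ℝ)/n - 1))
      - Real.sign (θ j * (2 * (k : ℝ)/n - 1)
          - ε * Real.sign (θ j * (2 * (k : ℝ)/n - 1))) with hF
  set a : ℕ → ℝ := fun k => (n.choose k : ℝ) * p ^ k * q ^ (n - k) with ha
  -- reflection : x(n-k) = -x(k)
  have hxrefl : ∀ k ∈ Finset.range (n + 1),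
      θ j * (2 * ((n - k : ℕ) : ℝ)/n - 1) = -(θ j * (2 * (k : ℝ)/n - 1)) := by
    intro k hk
    rw [Finset.mem_range, Nat.lt_succ_iff] at hk
    rw [Nat.cast_sub hk]
    field_simp
    ring
  have hFrefl : ∀ k ∈ Finset.range (n + 1), F (n - k) = -F k := by
    intro k hk
    simp only [hF]
    rw [hxrefl k hk]
    exact f_antisym ε _
  have hS : ∑ k ∈ Finset.range (n + 1), a k * F k
      = ∑ k ∈ Finset.range (n + 1), a (n - k) * (-(F k)) := by
    rw [← Finset.sum_range_reflect (fun k => a k * F k) (n + 1)]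
    refine Finset.sum_congr rfl fun k hk => ?_
    rw [Finset.mem_range, Nat.lt_succ_iff] at hk
    have h1 : n + 1 - 1 - k = n - k := by omega
    rw [h1, hFrefl k (by rw [Finset.mem_range]; omega)]
  have hterm : ∀ k ∈ Finset.range (n + 1), 0 ≤ (a k - a (n - k)) * F k := by
    intro k hk
    rw [Finset.mem_range, Nat.lt_succ_iff] at hk
    have hchoose : (n.choose (n - k) : ℝ) = (n.choose k : ℝ) := by
      rw [Nat.choose_symm hk]
    have hanm : a (n - k) = (n.choose k : ℝ) * p ^ (n - k) * q ^ k := by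
      simp only [ha, hchoose, Nat.sub_sub_self hk]
    rcases le_or_gt n (2 * k) with h2k | h2k
    · -- k ≥ n - k : x(k) ≥ 0, F k ≥ 0, a k ≥ a (n-k)
      have hm : n - k ≤ k := by omega
      have hx : 0 ≤ θ j * (2 * (k : ℝ)/n - 1) := by
        apply mul_nonneg (hθ j)
        rw [sub_nonneg, le_div_iff₀ hn0]
        have : (n : ℝ) ≤ 2 * k := by exact_mod_cast h2k
        linarith
      have hFk : 0 ≤ F k := f_nonneg ε _ hx
      have hapow : p ^ (n - k) * q ^ k ≤ p ^ k * q ^ (n - k) := by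
        have h1 : p ^ k * q ^ (n - k) = p ^ (n - k) * q ^ (n - k) * p ^ (k - (n - k)) := by
          rw [mul_assoc, mul_comm (q ^ (n - k)), ← mul_assoc, ← pow_add]
          congr 2; omega
        have h2 : p ^ (n - k) * q ^ k = p ^ (n - k) * q ^ (n - k) * q ^ (k - (n - k)) := by
          rw [mul_assoc, ← pow_add]
          congr 2; omega
        rw [h1, h2]
        exact mul_le_mul_of_nonneg_left (pow_le_pow_left₀ hq0.le hqp _) (by positivity)
      have : a (n - k) ≤ a k := by
        simp only [ha]
        rw [Nat.sub_sub_self hk, Nat.choose_symm hk, mul_assoc, mul_assoc]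
        exact mul_le_mul_of_nonneg_left hapow (Nat.cast_nonneg _)
      exact mul_nonneg (by linarith) hFk
    · -- x(k) ≤ 0, F k ≤ 0, a k ≤ a (n-k)
      have hx : θ j * (2 * (k : ℝ)/n - 1) ≤ 0 := by
        apply mul_nonpos_of_nonneg_of_nonpos (hθ j)
        rw [sub_nonpos, div_le_iff₀ hn0]
        have : (2 * k : ℝ) < n := by exact_mod_cast h2k
        linarith
      have hFk : F k ≤ 0 := by
        have := f_nonneg ε (-(θ j * (2 * (k : ℝ)/n - 1))) (by linarith)
        rw [f_antisym] at this
        simp only [hF]; linarith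
      have hapow : p ^ k * q ^ (n - k) ≤ p ^ (n - k) * q ^ k := by
        have h1 : p ^ (n - k) * q ^ k = p ^ k * q ^ k * p ^ (n - k - k) := by
          rw [mul_assoc, mul_comm (q ^ k), ← mul_assoc, ← pow_add]
          congr 2; omega
        have h2 : p ^ k * q ^ (n - k) = p ^ k * q ^ k * q ^ (n - k - k) := by
          rw [mul_assoc, ← pow_add]
          congr 2; omega
        rw [h1, h2]
        exact mul_le_mul_of_nonneg_left (pow_le_pow_left₀ hq0.le hqp _) (by positivity)
      have hak : a k ≤ a (n - k) := by
        simp only [ha]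
        rw [Nat.sub_sub_self hk, Nat.choose_symm hk, mul_assoc, mul_assoc]
        exact mul_le_mul_of_nonneg_left hapow (Nat.cast_nonneg _)
      nlinarith [mul_nonneg (by linarith : (0:ℝ) ≤ a (n - k) - a k)
        (by linarith : (0:ℝ) ≤ -F k)]
  have h2S : 0 ≤ 2 * ∑ k ∈ Finset.range (n + 1), a k * F k := by
    have : 2 * ∑ k ∈ Finset.range (n + 1), a k * F k
        = ∑ k ∈ Finset.range (n + 1), (a k - a (n - k)) * F k := by
      rw [two_mul]
      nth_rewrite 2 [hS]
      rw [← Finset.sum_add_distrib]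
      refine Finset.sum_congr rfl fun k _ => by ring
    rw [this]
    exact Finset.sum_nonneg hterm
  have hfinal : ∑ k ∈ Finset.range (n + 1), a k * F k
      = ∑ k ∈ Finset.range (n + 1),
        (n.choose k : ℝ) * p ^ k * q ^ (n - k) * F k := rfl
  linarith [h2S]
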